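/- The polynomial f_n = x_1 y_1 + ... + x_n y_n - 1 is irreducible in the polynomial ring k[x_1,...,x_n,y_1,...,y_n] over a field k, for n ≥ 1. -/

import Mathlib

open Polynomial in
lemma aux_irred {R : Type*} [CommRing R] [IsDomain R] {a c : R} (ha : Prime a)
    (hc : ¬ a ∣ c) : Irreducible (C a * X + C c) := by
  have ha0 : a ≠ 0 := ha.ne_zero
  have hdeg : (C a * X + C c).natDegree = 1 := natDegree_linear ha0
  have hp0 : (C a * X + C c) ≠ 0 := fun h => by simp [h] at hdeg
  have key : ∀ d : R, (C d ∣ C a * X + C c) → IsUnit d := by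
    intro d hd
    rw [C_dvd_iff_dvd_coeff] at hd
    have h1 : d ∣ a := by simpa using hd 1
    have h0 : d ∣ c := by simpa using hd 0
    obtain ⟨e, he⟩ := h1
    rcases ha.irreducible.isUnit_or_isUnit he with h | h
    · exact h
    · exfalso
      exact hc (dvd_trans ⟨(h.unit⁻¹ : Rˣ), by rw [he, mul_assoc, h.mul_val_inv, mul_one]⟩ h0)
  constructor
  · intro h
    have := natDegree_eq_zero_of_isUnit h
    omega
  · intro f g hfg
    have hf0 : f ≠ 0 := fun h => hp0 (by rw [hfg, h, zero_mul])
    have hg0 : g ≠ 0 := fun h => hp0 (by rw [hfg, h, mul_zero])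
    have : f.natDegree + g.natDegree = 1 := by
      rw [← natDegree_mul hf0 hg0, ← hfg, hdeg]
    rcases Nat.eq_zero_or_pos f.natDegree with h | h
    · left
      obtain ⟨d, rfl⟩ := natDegree_eq_zero.mp h
      exact (isUnit_C).mpr (key d ⟨g, hfg⟩)
    · right
      have hg : g.natDegree = 0 := by omega
      obtain ⟨d, rfl⟩ := natDegree_eq_zero.mp hg
      exact (isUnit_C).mpr (key d ⟨f, by rw [hfg, mul_comm]⟩)

lemma aux_prime_mvX {σ : Type*} {R : Type*} [CommRing R] [IsDomain R] (w : σ) :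
    Prime (MvPolynomial.X w : MvPolynomial σ R) := by
  classical
  set e : Option {u : σ // u ≠ w} ≃ σ := Equiv.optionSubtypeNe w with he
  set φ : MvPolynomial σ R ≃ₐ[R] Polynomial (MvPolynomial {u : σ // u ≠ w} R) :=
    (MvPolynomial.renameEquiv R e.symm).trans (MvPolynomial.optionEquivLeft R _) with hφ
  have h : φ (MvPolynomial.X w) = Polynomial.X := by
    simp [hφ, he, Equiv.optionSubtypeNe_symm_self, MvPolynomial.optionEquivLeft_X_none]
  have : Prime (φ (MvPolynomial.X w)) := h ▸ Polynomial.prime_X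
  exact (MulEquiv.prime_iff φ.toRingEquiv.toMulEquiv).mp this

/-- The polynomial `f_n = x_1 y_1 + ⋯ + x_n y_n - 1` in `k[x_1,…,x_n,y_1,…,y_n]`,
where `Sum.inl i` plays the role of `x_i` and `Sum.inr i` of `y_i`. -/
noncomputable def quadricOddPoly (k : Type*) [Field k] (n : ℕ) :
    MvPolynomial (Fin n ⊕ Fin n) k :=
  (∑ i : Fin n, MvPolynomial.X (Sum.inl i) * MvPolynomial.X (Sum.inr i)) - 1

theorem quadricOddPoly_irreducible (k : Type*) [Field k] (n : ℕ) (hn : 1 ≤ n) :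
    Irreducible (quadricOddPoly k n) := by
  classical
  set i0 : Fin n := ⟨0, hn⟩ with hi0
  set v : Fin n ⊕ Fin n := Sum.inr i0 with hv
  set σ' := {w : Fin n ⊕ Fin n // w ≠ v}
  set e : Option σ' ≃ (Fin n ⊕ Fin n) := Equiv.optionSubtypeNe v with he
  set φ : MvPolynomial (Fin n ⊕ Fin n) k ≃ₐ[k] Polynomial (MvPolynomial σ' k) :=
    (MvPolynomial.renameEquiv k e.symm).trans (MvPolynomial.optionEquivLeft k σ') with hφ
  set a : MvPolynomial σ' k := MvPolynomial.X ⟨Sum.inl i0, by simp [hv]⟩ with ha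
  set c : MvPolynomial σ' k :=
    (∑ i ∈ (Finset.univ.erase i0).attach,
      MvPolynomial.X (⟨Sum.inl i.1, by simp [hv]⟩ : σ') *
      MvPolynomial.X (⟨Sum.inr i.1, by simp [hv, (Finset.mem_erase.mp i.2).1]⟩ : σ')) - 1 with hc
  have himg : φ (quadricOddPoly k n) = Polynomial.C a * Polynomial.X + Polynomial.C c := by
    rw [quadricOddPoly, map_sub, map_one, map_sum,
      ← Finset.add_sum_erase _ _ (Finset.mem_univ i0),
      ← Finset.sum_attach (Finset.univ.erase i0)
        (fun x => φ (MvPolynomial.X (Sum.inl x) * MvPolynomial.X (Sum.inr x)))]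
    have hA : φ (MvPolynomial.X (Sum.inl i0) * MvPolynomial.X (Sum.inr i0))
        = Polynomial.C a * Polynomial.X := by
      rw [map_mul]
      rw [hφ]
      simp only [AlgEquiv.trans_apply, MvPolynomial.renameEquiv_apply, MvPolynomial.rename_X]
      rw [show e.symm (Sum.inr i0) = none from Equiv.optionSubtypeNe_symm_self v,
        show e.symm (Sum.inl i0) = some ⟨Sum.inl i0, by simp [hv]⟩ from
          Equiv.optionSubtypeNe_symm_of_ne (by simp [hv]),
        MvPolynomial.optionEquivLeft_X_none, MvPolynomial.optionEquivLeft_X_some, ha]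
    have hS : ∀ x ∈ (Finset.univ.erase i0).attach,
        φ (MvPolynomial.X (Sum.inl x.1) * MvPolynomial.X (Sum.inr x.1)) =
        Polynomial.C (MvPolynomial.X (⟨Sum.inl x.1, by simp [hv]⟩ : σ') *
          MvPolynomial.X (⟨Sum.inr x.1, by simp [hv, (Finset.mem_erase.mp x.2).1]⟩ : σ')) := by
      intro x _
      rw [map_mul, hφ]
      simp only [AlgEquiv.trans_apply, MvPolynomial.renameEquiv_apply, MvPolynomial.rename_X]
      rw [show e.symm (Sum.inl x.1) = some ⟨Sum.inl x.1, by simp [hv]⟩ from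
          Equiv.optionSubtypeNe_symm_of_ne (by simp [hv]),
        show e.symm (Sum.inr x.1) = some ⟨Sum.inr x.1, by
            simp [hv, (Finset.mem_erase.mp x.2).1]⟩ from
          Equiv.optionSubtypeNe_symm_of_ne (by simp [hv, (Finset.mem_erase.mp x.2).1]),
        MvPolynomial.optionEquivLeft_X_some, MvPolynomial.optionEquivLeft_X_some, map_mul]
    rw [hA, Finset.sum_congr rfl hS, hc, map_sub, map_one, map_sum]
    ring
  have hprime : Prime a := aux_prime_mvX _
  have hndvd : ¬ a ∣ c := by
    intro hdvd
    have h2 := map_dvd (MvPolynomial.eval (fun _ => (0 : k))) hdvd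
    rw [ha, hc] at h2
    simp at h2
  have hirr : Irreducible (φ (quadricOddPoly k n)) := himg ▸ aux_irred hprime hndvd
  exact (MulEquiv.irreducible_iff φ.toRingEquiv.toMulEquiv).mp hirr
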